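/- arXiv:1708.07211 — 3 statements merged into one kernel-verified Lean document; each statement's English description precedes it below -/
import Mathlib

section
/- Let p, p₁ be positive probability densities on (M, λ) with Hellinger integral C = ∫ √(p·p₁) dλ ∈ (0, 1), and set l = 2·arccos C. Define τ-density q(x) = (1/sin(l/2))·(√(p₁(x)·p(x)) − cos(l/2)·p(x)). Then ∫ q dλ = 0 and ∫ (q²/p) dλ = 1. -/
open MeasureTheory Real

/-- the initial velocity density
`q = (1/sin(l/2))(√(p₁ p) − cos(l/2) p)` of the geodesic integrates to `0` and
has unit Fisher norm: `∫ q²/p dλ = 1`. -/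
theorem initial_velocity_unit_norm
    {M : Type*} [MeasurableSpace M] (lam : Measure M) [IsProbabilityMeasure lam]
    (p p₁ : M → ℝ) (hp : Measurable p) (hp₁ : Measurable p₁)
    (hp0 : ∀ x, 0 < p x) (hp₁0 : ∀ x, 0 < p₁ x)
    (hpint : ∫ x, p x ∂lam = 1) (hp₁int : ∫ x, p₁ x ∂lam = 1)
    (hL2p : MemLp (fun x => Real.sqrt (p x)) 2 lam)
    (hL2p₁ : MemLp (fun x => Real.sqrt (p₁ x)) 2 lam)
    (C : ℝ) (hC : C = ∫ x, Real.sqrt (p x * p₁ x) ∂lam)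
    (hC0 : 0 < C) (hC1 : C < 1)
    (l : ℝ) (hl : l = 2 * Real.arccos C)
    (q : M → ℝ)
    (hq : ∀ x, q x = (1 / Real.sin (l / 2)) *
      (Real.sqrt (p₁ x * p x) - Real.cos (l / 2) * p x)) :
    (∫ x, q x ∂lam = 0) ∧ (∫ x, (q x)^2 / p x ∂lam = 1) := by
  have hl2 : l / 2 = Real.arccos C := by rw [hl]; ring
  have hcos : Real.cos (l / 2) = C := by
    rw [hl2, Real.cos_arccos (by linarith) (by linarith)]
  have hsin : Real.sin (l / 2) = Real.sqrt (1 - C ^ 2) := by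
    rw [hl2, Real.sin_arccos]
  have hC2 : (0:ℝ) < 1 - C ^ 2 := by nlinarith
  have hsinpos : 0 < Real.sin (l / 2) := by
    rw [hsin]; exact Real.sqrt_pos.mpr hC2
  have hsin2 : Real.sin (l / 2) ^ 2 = 1 - C ^ 2 := by
    rw [hsin, Real.sq_sqrt hC2.le]
  -- integrability
  have hip : Integrable p lam := by
    have := hL2p.integrable_sq
    simpa [Real.sq_sqrt (hp0 _).le] using this
  have hip₁ : Integrable p₁ lam := by
    have := hL2p₁.integrable_sq
    simpa [Real.sq_sqrt (hp₁0 _).le] using this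
  have hmeas : Measurable fun x => Real.sqrt (p₁ x * p x) :=
    (hp₁.mul hp).sqrt
  have hia : Integrable (fun x => Real.sqrt (p₁ x * p x)) lam := by
    refine Integrable.mono' ((hip₁.add hip).div_const 2) hmeas.aestronglyMeasurable
      (Filter.Eventually.of_forall fun x => ?_)
    rw [Real.norm_of_nonneg (Real.sqrt_nonneg _)]
    have h1 : Real.sqrt (p₁ x * p x) ≤ (p₁ x + p x) / 2 := by
      rw [show p₁ x * p x = Real.sqrt (p₁ x) ^2 * Real.sqrt (p x) ^2 by
        rw [Real.sq_sqrt (hp₁0 x).le, Real.sq_sqrt (hp0 x).le]]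
      rw [← mul_pow, Real.sqrt_sq (by positivity)]
      nlinarith [sq_nonneg (Real.sqrt (p₁ x) - Real.sqrt (p x)),
        Real.sq_sqrt (hp₁0 x).le, Real.sq_sqrt (hp0 x).le]
    simpa using h1
  have haint : ∫ x, Real.sqrt (p₁ x * p x) ∂lam = C := by
    rw [hC]; congr 1; ext x; rw [mul_comm]
  -- first integral
  have h1 : ∫ x, q x ∂lam = 0 := by
    have : (fun x => q x) = fun x =>
        (1 / Real.sin (l / 2)) * (Real.sqrt (p₁ x * p x) - C * p x) := by
      ext x; rw [hq x, hcos]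
    rw [this, integral_const_mul, integral_sub hia (hip.const_mul C),
      integral_const_mul, haint, hpint]
    simp
  refine ⟨h1, ?_⟩
  -- second integral
  have hpt : ∀ x, (q x)^2 / p x
      = (1 / (1 - C ^ 2)) * (p₁ x - 2 * C * Real.sqrt (p₁ x * p x) + C ^ 2 * p x) := by
    intro x
    have ha2 : Real.sqrt (p₁ x * p x) ^ 2 = p₁ x * p x :=
      Real.sq_sqrt (mul_nonneg (hp₁0 x).le (hp0 x).le)
    rw [hq x, hcos]
    have hpne : p x ≠ 0 := (hp0 x).ne'
    field_simp
    rw [hsin2]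
    linear_combination (1 - C ^ 2) * ha2
  rw [show (fun x => (q x)^2 / p x) = fun x =>
      (1 / (1 - C ^ 2)) * (p₁ x - 2 * C * Real.sqrt (p₁ x * p x) + C ^ 2 * p x)
      from funext hpt]
  have hI1 : Integrable (fun x => p₁ x - 2 * C * Real.sqrt (p₁ x * p x)) lam :=
    hip₁.sub (hia.const_mul _)
  have hI2 : Integrable (fun x => C ^ 2 * p x) lam := hip.const_mul _
  have hI3 : Integrable (fun x => 2 * C * Real.sqrt (p₁ x * p x)) lam :=
    hia.const_mul _
  rw [integral_const_mul, integral_add hI1 hI2, integral_sub hip₁ hI3,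
    integral_const_mul, integral_const_mul, haint, hpint, hp₁int]
  field_simp
  ring
end

section
/- Let p, p₁ be positive probability densities on (M, λ) with C = ∫ √(p·p₁) dλ ∈ (0, 1) and l = 2·arccos C. Define for t ∈ [0, l] the function p_t(x) = ((sin((l−t)/2)·√p(x) + sin(t/2)·√p₁(x))/sin(l/2))². Then ∫ p_t dλ = 1 for every t ∈ [0, l], p_t is positive, p_0 = p, and p_l = p₁. -/
open MeasureTheory Real

/-- the geodesic densities
`p_t = ((sin((l−t)/2)√p + sin(t/2)√p₁)/sin(l/2))²` are probability densities,
positive, with `p_0 = p` and `p_l = p₁`. -/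
theorem geodesic_densities_probability
    {M : Type*} [MeasurableSpace M] (lam : Measure M) [IsProbabilityMeasure lam]
    (p p₁ : M → ℝ) (hp : Measurable p) (hp₁ : Measurable p₁)
    (hp0 : ∀ x, 0 < p x) (hp₁0 : ∀ x, 0 < p₁ x)
    (hpint : ∫ x, p x ∂lam = 1) (hp₁int : ∫ x, p₁ x ∂lam = 1)
    (hL2p : MemLp (fun x => Real.sqrt (p x)) 2 lam)
    (hL2p₁ : MemLp (fun x => Real.sqrt (p₁ x)) 2 lam)
    (C : ℝ) (hC : C = ∫ x, Real.sqrt (p x * p₁ x) ∂lam)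
    (hC0 : 0 < C) (hC1 : C < 1)
    (l : ℝ) (hl : l = 2 * Real.arccos C)
    (pt : ℝ → M → ℝ)
    (hpt : ∀ t x, pt t x = ((Real.sin ((l - t) / 2) * Real.sqrt (p x)
      + Real.sin (t / 2) * Real.sqrt (p₁ x)) / Real.sin (l / 2))^2) :
    (∀ t, 0 ≤ t → t ≤ l → ∫ x, pt t x ∂lam = 1) ∧
    (∀ t, 0 ≤ t → t ≤ l → ∀ x, 0 < pt t x) ∧
    (∀ x, pt 0 x = p x) ∧ (∀ x, pt l x = p₁ x) := by
  have hCm1 : (-1 : ℝ) ≤ C := by linarith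
  have hCle1 : C ≤ 1 := le_of_lt hC1
  have hl2 : l / 2 = Real.arccos C := by rw [hl]; ring
  have hcos : Real.cos (l / 2) = C := by rw [hl2, Real.cos_arccos hCm1 hCle1]
  have hl2pos : 0 < l / 2 := by rw [hl2]; exact Real.arccos_pos.2 hC1
  have hl2lt : l / 2 < Real.pi / 2 := by rw [hl2]; exact Real.arccos_lt_pi_div_two.2 hC0
  have hl2ltpi : l / 2 < Real.pi := lt_trans hl2lt (by linarith [Real.pi_pos])
  have hs : 0 < Real.sin (l / 2) := Real.sin_pos_of_pos_of_lt_pi hl2pos hl2ltpi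
  have hlpos : 0 < l := by linarith
  -- integrability facts
  have hf2 : Integrable (fun x => Real.sqrt (p x) ^ 2) lam := hL2p.integrable_sq
  have hg2 : Integrable (fun x => Real.sqrt (p₁ x) ^ 2) lam := hL2p₁.integrable_sq
  have hfg : Integrable (fun x => Real.sqrt (p x) * Real.sqrt (p₁ x)) lam := by
    have h1 : Integrable (fun x => (Real.sqrt (p x) + Real.sqrt (p₁ x)) ^ 2) lam :=
      (hL2p.add hL2p₁).integrable_sq
    have h2 := ((h1.sub hf2).sub hg2).div_const 2
    refine h2.congr (Filter.Eventually.of_forall fun x => ?_)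
    simp only [Pi.sub_apply]
    ring
  -- integral values
  have hintf2 : ∫ x, Real.sqrt (p x) ^ 2 ∂lam = 1 := by
    rw [← hpint]
    exact integral_congr_ae (Filter.Eventually.of_forall fun x =>
      Real.sq_sqrt (hp0 x).le)
  have hintg2 : ∫ x, Real.sqrt (p₁ x) ^ 2 ∂lam = 1 := by
    rw [← hp₁int]
    exact integral_congr_ae (Filter.Eventually.of_forall fun x =>
      Real.sq_sqrt (hp₁0 x).le)
  have hintfg : ∫ x, Real.sqrt (p x) * Real.sqrt (p₁ x) ∂lam = C := by
    rw [hC]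
    exact integral_congr_ae (Filter.Eventually.of_forall fun x =>
      (Real.sqrt_mul (hp0 x).le _).symm)
  refine ⟨?_, ?_, ?_, ?_⟩
  · -- the integral is 1
    intro t ht0 htl
    set A := Real.sin ((l - t) / 2) with hA
    set B := Real.sin (t / 2) with hB
    have hrw : ∀ x, pt t x =
        (A ^ 2 * Real.sqrt (p x) ^ 2 + (2 * A * B) * (Real.sqrt (p x) * Real.sqrt (p₁ x))
          + B ^ 2 * Real.sqrt (p₁ x) ^ 2) / Real.sin (l / 2) ^ 2 := by
      intro x; rw [hpt]; field_simp; ring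
    calc ∫ x, pt t x ∂lam
        = ∫ x, (A ^ 2 * Real.sqrt (p x) ^ 2
            + (2 * A * B) * (Real.sqrt (p x) * Real.sqrt (p₁ x))
            + B ^ 2 * Real.sqrt (p₁ x) ^ 2) / Real.sin (l / 2) ^ 2 ∂lam := by
          exact integral_congr_ae (Filter.Eventually.of_forall hrw)
      _ = (∫ x, A ^ 2 * Real.sqrt (p x) ^ 2
            + (2 * A * B) * (Real.sqrt (p x) * Real.sqrt (p₁ x))
            + B ^ 2 * Real.sqrt (p₁ x) ^ 2 ∂lam) / Real.sin (l / 2) ^ 2 :=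
          integral_div _ _
      _ = (A ^ 2 * 1 + (2 * A * B) * C + B ^ 2 * 1) / Real.sin (l / 2) ^ 2 := by
          have hIa : Integrable (fun x => A ^ 2 * Real.sqrt (p x) ^ 2) lam :=
            hf2.const_mul _
          have hIb : Integrable
              (fun x => (2 * A * B) * (Real.sqrt (p x) * Real.sqrt (p₁ x))) lam :=
            hfg.const_mul _
          have hIc : Integrable (fun x => B ^ 2 * Real.sqrt (p₁ x) ^ 2) lam :=
            hg2.const_mul _
          have hIab : Integrable (fun x => A ^ 2 * Real.sqrt (p x) ^ 2
              + (2 * A * B) * (Real.sqrt (p x) * Real.sqrt (p₁ x))) lam := hIa.add hIb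
          rw [integral_add hIab hIc, integral_add hIa hIb,
            integral_const_mul, integral_const_mul, integral_const_mul,
            hintf2, hintg2, hintfg]
      _ = 1 := by
          have key : A ^ 2 + 2 * A * B * C + B ^ 2 = Real.sin (l / 2) ^ 2 := by
            have hab : (l - t) / 2 + t / 2 = l / 2 := by ring
            have hCrw : C = Real.cos ((l - t) / 2 + t / 2) := by rw [hab, hcos]
            have hsin : Real.sin (l / 2) = Real.sin ((l - t) / 2 + t / 2) := by rw [hab]
            rw [hA, hB, hCrw, hsin, Real.sin_add, Real.cos_add]
            have ha := Real.sin_sq_add_cos_sq ((l - t) / 2)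
            have hb := Real.sin_sq_add_cos_sq (t / 2)
            nlinarith [ha, hb]
          rw [mul_one, mul_one, key, div_self (by positivity)]
  · -- positivity
    intro t ht0 htl x
    have hA0 : 0 ≤ Real.sin ((l - t) / 2) :=
      Real.sin_nonneg_of_nonneg_of_le_pi (by linarith) (by linarith)
    have hB0 : 0 ≤ Real.sin (t / 2) :=
      Real.sin_nonneg_of_nonneg_of_le_pi (by linarith) (by linarith)
    have hnum : 0 < Real.sin ((l - t) / 2) * Real.sqrt (p x)
        + Real.sin (t / 2) * Real.sqrt (p₁ x) := by
      rcases lt_or_eq_of_le htl with h | h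
      · have hApos : 0 < Real.sin ((l - t) / 2) :=
          Real.sin_pos_of_pos_of_lt_pi (by linarith) (by linarith)
        have : 0 < Real.sin ((l - t) / 2) * Real.sqrt (p x) :=
          mul_pos hApos (Real.sqrt_pos.2 (hp0 x))
        have : 0 ≤ Real.sin (t / 2) * Real.sqrt (p₁ x) :=
          mul_nonneg hB0 (Real.sqrt_nonneg _)
        linarith
      · have hBpos : 0 < Real.sin (t / 2) := by
          rw [h]; exact hs
        have : 0 < Real.sin (t / 2) * Real.sqrt (p₁ x) :=
          mul_pos hBpos (Real.sqrt_pos.2 (hp₁0 x))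
        have : 0 ≤ Real.sin ((l - t) / 2) * Real.sqrt (p x) :=
          mul_nonneg hA0 (Real.sqrt_nonneg _)
        linarith
    rw [hpt]
    exact pow_pos (div_pos hnum hs) 2
  · -- t = 0
    intro x
    rw [hpt]
    simp only [sub_zero, zero_div, Real.sin_zero, zero_mul, add_zero]
    rw [mul_div_cancel_left₀ _ hs.ne', Real.sq_sqrt (hp0 x).le]
  · -- t = l
    intro x
    rw [hpt]
    simp only [sub_self, zero_div, Real.sin_zero, zero_mul, zero_add]
    rw [mul_div_cancel_left₀ _ hs.ne', Real.sq_sqrt (hp₁0 x).le]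
end

section
/- Let p, p', p₁, p₁' be positive probability densities on (M, λ) with square roots in L², and let P = √(p·p₁)/∫√(p·p₁)dλ and P' = √(p'·p₁')/∫√(p'·p₁')dλ be the normalized geometric mean densities (assume both Hellinger integrals are positive). Then ‖√P − √P'‖_{L²}² ≤ (2/∫√(p·p₁)dλ)·(‖√p − √p'‖_{L²} + ‖√p₁ − √p₁'‖_{L²}). In particular the normalized geometric mean is continuous in the Hellinger topology. -/
open MeasureTheory Real

lemma memL2_mul_integrable {α : Type*} [MeasurableSpace α] {μ : Measure α}
    {u w : α → ℝ} (hu : MemLp u 2 μ) (hw : MemLp w 2 μ) :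
    Integrable (fun x => u x * w x) μ := by
  have h1 := hu.integrable_sq
  have h2 := hw.integrable_sq
  refine Integrable.mono' (((h1.add h2)).div_const 2) (hu.1.mul hw.1) ?_
  filter_upwards with x
  simp only [Pi.add_apply]
  rw [Real.norm_eq_abs, abs_mul]
  nlinarith [sq_abs (u x), sq_abs (w x), sq_nonneg (|u x| - |w x|), abs_nonneg (u x), abs_nonneg (w x)]

lemma cs_integral {α : Type*} [MeasurableSpace α] {μ : Measure α}
    {u w : α → ℝ} (hu : MemLp u 2 μ) (hw : MemLp w 2 μ)
    (hu0 : ∀ x, 0 ≤ u x) (hw0 : ∀ x, 0 ≤ w x) :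
    ∫ x, u x * w x ∂μ ≤ Real.sqrt (∫ x, u x ^ 2 ∂μ) * Real.sqrt (∫ x, w x ^ 2 ∂μ) := by
  have hpq : Real.HolderConjugate 2 2 := Real.HolderConjugate.two_two
  have h := integral_mul_le_Lp_mul_Lq_of_nonneg hpq (μ := μ) (f := u) (g := w)
    (Filter.Eventually.of_forall hu0) (Filter.Eventually.of_forall hw0)
    (by simpa using hu) (by simpa using hw)
  have e2 : ∀ z : ℝ, z ^ (2:ℝ) = z ^ 2 := fun z => by
    rw [show (2:ℝ) = ((2:ℕ):ℝ) by norm_num, Real.rpow_natCast]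
  simp only [e2] at h
  rw [Real.sqrt_eq_rpow, Real.sqrt_eq_rpow]
  convert h using 2

lemma alg_ineq {a b s : ℝ} (ha : 0 < a) (hb : 0 < b) (hs : 0 ≤ s) (hsab : s ≤ a^2 + b^2) :
    2 - (a^2 + b^2 - s) / (a * b) ≤ 2 * s / a^2 := by
  have hab : 0 < a * b := mul_pos ha hb
  have ha2 : 0 < a^2 := by positivity
  have h1 : 2 - (a^2+b^2-s)/(a*b) = (2*(a*b) - (a^2+b^2-s))/(a*b) := by field_simp
  rw [h1, div_le_div_iff₀ hab ha2]
  rcases le_or_gt a (2*b) with h | h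
  · nlinarith [mul_nonneg (mul_nonneg ha.le hs) (by linarith : (0:ℝ) ≤ 2*b - a),
      mul_nonneg (sq_nonneg (a-b)) (sq_nonneg a)]
  · nlinarith [mul_nonneg (mul_nonneg (sub_nonneg.2 hsab) (by linarith : (0:ℝ) ≤ a - 2*b)) ha.le,
      mul_pos (mul_pos hb hb) (mul_pos hb ha)]

lemma sqrt_sub_sq_le_abs {X Y : ℝ} (hX : 0 ≤ X) (hY : 0 ≤ Y) :
    (Real.sqrt X - Real.sqrt Y)^2 ≤ |X - Y| := by
  have key : ∀ Z W : ℝ, 0 ≤ Z → Z ≤ W → (Real.sqrt Z - Real.sqrt W)^2 ≤ W - Z := by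
    intro Z W hZ h
    have hs : Real.sqrt Z ≤ Real.sqrt W := Real.sqrt_le_sqrt h
    nlinarith [Real.sq_sqrt hZ, Real.sq_sqrt (hZ.trans h),
      mul_le_mul_of_nonneg_left hs (Real.sqrt_nonneg Z)]
  rcases le_total X Y with h | h
  · rw [abs_of_nonpos (sub_nonpos.2 h)]; have := key X Y hX h; linarith
  · rw [abs_of_nonneg (sub_nonneg.2 h)]
    have := key Y X hY h
    have e : (Real.sqrt X - Real.sqrt Y)^2 = (Real.sqrt Y - Real.sqrt X)^2 := by ring
    linarith

/-- continuity estimate for the normalized geometric mean: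
`‖√P − √P'‖²_{L²} ≤ (2/∫√(p p₁))(‖√p − √p'‖_{L²} + ‖√p₁ − √p₁'‖_{L²})`. -/
theorem normalized_geometric_mean_continuity
    {M : Type*} [MeasurableSpace M] (lam : Measure M) [IsProbabilityMeasure lam]
    (p p' p₁ p₁' : M → ℝ)
    (hp : Measurable p) (hp' : Measurable p') (hp₁ : Measurable p₁) (hp₁' : Measurable p₁')
    (hp0 : ∀ x, 0 < p x) (hp'0 : ∀ x, 0 < p' x)
    (hp₁0 : ∀ x, 0 < p₁ x) (hp₁'0 : ∀ x, 0 < p₁' x)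
    (hpint : ∫ x, p x ∂lam = 1) (hp'int : ∫ x, p' x ∂lam = 1)
    (hp₁int : ∫ x, p₁ x ∂lam = 1) (hp₁'int : ∫ x, p₁' x ∂lam = 1)
    (hL2p : MemLp (fun x => Real.sqrt (p x)) 2 lam)
    (hL2p' : MemLp (fun x => Real.sqrt (p' x)) 2 lam)
    (hL2p₁ : MemLp (fun x => Real.sqrt (p₁ x)) 2 lam)
    (hL2p₁' : MemLp (fun x => Real.sqrt (p₁' x)) 2 lam)
    (hH : 0 < ∫ x, Real.sqrt (p x * p₁ x) ∂lam)
    (hH' : 0 < ∫ x, Real.sqrt (p' x * p₁' x) ∂lam)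
    (P P' : M → ℝ)
    (hP : ∀ x, P x = Real.sqrt (p x * p₁ x) / ∫ y, Real.sqrt (p y * p₁ y) ∂lam)
    (hP' : ∀ x, P' x = Real.sqrt (p' x * p₁' x) / ∫ y, Real.sqrt (p' y * p₁' y) ∂lam) :
    ∫ x, (Real.sqrt (P x) - Real.sqrt (P' x))^2 ∂lam
      ≤ (2 / ∫ x, Real.sqrt (p x * p₁ x) ∂lam) *
          (Real.sqrt (∫ x, (Real.sqrt (p x) - Real.sqrt (p' x))^2 ∂lam)
            + Real.sqrt (∫ x, (Real.sqrt (p₁ x) - Real.sqrt (p₁' x))^2 ∂lam)) := by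
  set A := ∫ x, Real.sqrt (p x * p₁ x) ∂lam with hA_def
  set A' := ∫ x, Real.sqrt (p' x * p₁' x) ∂lam with hA'_def
  set f : M → ℝ := fun x => Real.sqrt (Real.sqrt (p x * p₁ x)) with hf_def
  set g : M → ℝ := fun x => Real.sqrt (Real.sqrt (p' x * p₁' x)) with hg_def
  have hfm : Measurable f := ((hp.mul hp₁).sqrt).sqrt
  have hgm : Measurable g := ((hp'.mul hp₁').sqrt).sqrt
  -- squares of f and g
  have hf2 : ∀ x, f x ^ 2 = Real.sqrt (p x * p₁ x) := fun x =>
    Real.sq_sqrt (Real.sqrt_nonneg _)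
  have hg2 : ∀ x, g x ^ 2 = Real.sqrt (p' x * p₁' x) := fun x =>
    Real.sq_sqrt (Real.sqrt_nonneg _)
  -- integrability of √(p p₁) etc.
  have hint_sq : Integrable (fun x => Real.sqrt (p x * p₁ x)) lam := by
    have he : (fun x => Real.sqrt (p x * p₁ x))
        = fun x => Real.sqrt (p x) * Real.sqrt (p₁ x) :=
      funext fun x => Real.sqrt_mul (hp0 x).le _
    rw [he]; exact memL2_mul_integrable hL2p hL2p₁
  have hint_sq' : Integrable (fun x => Real.sqrt (p' x * p₁' x)) lam := by
    have he : (fun x => Real.sqrt (p' x * p₁' x))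
        = fun x => Real.sqrt (p' x) * Real.sqrt (p₁' x) :=
      funext fun x => Real.sqrt_mul (hp'0 x).le _
    rw [he]; exact memL2_mul_integrable hL2p' hL2p₁'
  have hfL2 : MemLp f 2 lam := by
    refine (memLp_two_iff_integrable_sq hfm.aestronglyMeasurable).2 ?_
    have he : (fun x => f x ^ 2) = fun x => Real.sqrt (p x * p₁ x) := funext hf2
    rw [he]; exact hint_sq
  have hgL2 : MemLp g 2 lam := by
    refine (memLp_two_iff_integrable_sq hgm.aestronglyMeasurable).2 ?_
    have he : (fun x => g x ^ 2) = fun x => Real.sqrt (p' x * p₁' x) := funext hg2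
    rw [he]; exact hint_sq'
  have hf2_int : Integrable (fun x => f x ^ 2) lam := hfL2.integrable_sq
  have hg2_int : Integrable (fun x => g x ^ 2) lam := hgL2.integrable_sq
  have hfg_int : Integrable (fun x => f x * g x) lam := memL2_mul_integrable hfL2 hgL2
  have hfA : ∫ x, f x ^ 2 ∂lam = A := by
    rw [hA_def]; exact integral_congr_ae (Filter.Eventually.of_forall hf2)
  have hgA' : ∫ x, g x ^ 2 ∂lam = A' := by
    rw [hA'_def]; exact integral_congr_ae (Filter.Eventually.of_forall hg2)
  set c := ∫ x, f x * g x ∂lam with hc_def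
  have hc0 : 0 ≤ c := integral_nonneg fun x => mul_nonneg (Real.sqrt_nonneg _) (Real.sqrt_nonneg _)
  -- s = ∫ (f-g)²
  set s := ∫ x, (f x - g x) ^ 2 ∂lam with hs_def
  have hs_int : Integrable (fun x => (f x - g x) ^ 2) lam := (hfL2.sub hgL2).integrable_sq
  have hs_eq : s = A + A' - 2 * c := by
    have hpt : (fun x => (f x - g x) ^ 2)
        = fun x => f x ^ 2 + g x ^ 2 - 2 * (f x * g x) := funext fun x => by ring
    have hadd : Integrable (fun x => f x ^ 2 + g x ^ 2) lam := hf2_int.add hg2_int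
    have hmul : Integrable (fun x => 2 * (f x * g x)) lam := hfg_int.const_mul 2
    rw [hs_def, hpt, integral_sub hadd hmul,
      integral_add hf2_int hg2_int, integral_const_mul, hfA, hgA', hc_def]
  have hs0 : 0 ≤ s := integral_nonneg fun x => sq_nonneg _
  set a := Real.sqrt A with ha_def
  set b := Real.sqrt A' with hb_def
  have ha : 0 < a := Real.sqrt_pos.2 hH
  have hb : 0 < b := Real.sqrt_pos.2 hH'
  have haA : a ^ 2 = A := Real.sq_sqrt hH.le
  have hbA : b ^ 2 = A' := Real.sq_sqrt hH'.le
  -- the left-hand side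
  have hsqrtP : ∀ x, Real.sqrt (P x) = f x / a := fun x => by
    rw [hP x, Real.sqrt_div (Real.sqrt_nonneg _)]
  have hsqrtP' : ∀ x, Real.sqrt (P' x) = g x / b := fun x => by
    rw [hP' x, Real.sqrt_div (Real.sqrt_nonneg _)]
  have hLHS : ∫ x, (Real.sqrt (P x) - Real.sqrt (P' x)) ^ 2 ∂lam
      = 2 - 2 * c / (a * b) := by
    have hpt : (fun x => (Real.sqrt (P x) - Real.sqrt (P' x)) ^ 2)
        = fun x => (1/a^2) * f x ^ 2 + (1/b^2) * g x ^ 2 - (2/(a*b)) * (f x * g x) := by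
      funext x
      rw [hsqrtP x, hsqrtP' x]
      field_simp
      ring
    calc ∫ x, (Real.sqrt (P x) - Real.sqrt (P' x)) ^ 2 ∂lam
        = ∫ x, ((1/a^2) * f x ^ 2 + (1/b^2) * g x ^ 2 - (2/(a*b)) * (f x * g x)) ∂lam := by
          rw [hpt]
      _ = (1/a^2) * A + (1/b^2) * A' - (2/(a*b)) * c := by
          have hi1 : Integrable (fun x => (1/a^2) * f x ^ 2) lam := hf2_int.const_mul _
          have hi2 : Integrable (fun x => (1/b^2) * g x ^ 2) lam := hg2_int.const_mul _
          have hadd : Integrable (fun x => (1/a^2) * f x ^ 2 + (1/b^2) * g x ^ 2) lam := hi1.add hi2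
          have hmul : Integrable (fun x => (2/(a*b)) * (f x * g x)) lam := hfg_int.const_mul _
          rw [integral_sub hadd hmul, integral_add hi1 hi2,
            integral_const_mul, integral_const_mul, integral_const_mul, hfA, hgA', hc_def]
      _ = 2 - 2 * c / (a * b) := by
          rw [← haA, ← hbA]; field_simp; ring
  -- pointwise bound on (f-g)²
  have hpt2 : ∀ x, (f x - g x) ^ 2
      ≤ Real.sqrt (p₁ x) * |Real.sqrt (p x) - Real.sqrt (p' x)|
        + Real.sqrt (p' x) * |Real.sqrt (p₁ x) - Real.sqrt (p₁' x)| := by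
    intro x
    have hfx : f x = Real.sqrt (Real.sqrt (p x) * Real.sqrt (p₁ x)) := by
      rw [hf_def]; simp only
      rw [Real.sqrt_mul (hp0 x).le]
    have hgx : g x = Real.sqrt (Real.sqrt (p' x) * Real.sqrt (p₁' x)) := by
      rw [hg_def]; simp only
      rw [Real.sqrt_mul (hp'0 x).le]
    set u := Real.sqrt (p x)
    set v := Real.sqrt (p₁ x)
    set u' := Real.sqrt (p' x)
    set v' := Real.sqrt (p₁' x)
    have hu : 0 ≤ u := Real.sqrt_nonneg _
    have hv : 0 ≤ v := Real.sqrt_nonneg _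
    have hu' : 0 ≤ u' := Real.sqrt_nonneg _
    have hv' : 0 ≤ v' := Real.sqrt_nonneg _
    have h1 : (f x - g x) ^ 2 ≤ |u * v - u' * v'| := by
      rw [hfx, hgx]
      exact sqrt_sub_sq_le_abs (mul_nonneg hu hv) (mul_nonneg hu' hv')
    have h2 : |u * v - u' * v'| ≤ v * |u - u'| + u' * |v - v'| := by
      calc |u * v - u' * v'| = |v * (u - u') + u' * (v - v')| := by ring_nf
        _ ≤ |v * (u - u')| + |u' * (v - v')| := abs_add_le _ _
        _ = v * |u - u'| + u' * |v - v'| := by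
            rw [abs_mul, abs_mul, abs_of_nonneg hv, abs_of_nonneg hu']
    linarith
  -- the two L² distances
  set d₁ := Real.sqrt (∫ x, (Real.sqrt (p x) - Real.sqrt (p' x)) ^ 2 ∂lam) with hd₁_def
  set d₂ := Real.sqrt (∫ x, (Real.sqrt (p₁ x) - Real.sqrt (p₁' x)) ^ 2 ∂lam) with hd₂_def
  have hw₁ : MemLp (fun x => |Real.sqrt (p x) - Real.sqrt (p' x)|) 2 lam := by
    have h := (hL2p.sub hL2p').abs
    exact h
  have hw₂ : MemLp (fun x => |Real.sqrt (p₁ x) - Real.sqrt (p₁' x)|) 2 lam := by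
    have h := (hL2p₁.sub hL2p₁').abs
    exact h
  have hint₁ : Integrable
      (fun x => Real.sqrt (p₁ x) * |Real.sqrt (p x) - Real.sqrt (p' x)|) lam :=
    memL2_mul_integrable hL2p₁ hw₁
  have hint₂ : Integrable
      (fun x => Real.sqrt (p' x) * |Real.sqrt (p₁ x) - Real.sqrt (p₁' x)|) lam :=
    memL2_mul_integrable hL2p' hw₂
  have hCS₁ : ∫ x, Real.sqrt (p₁ x) * |Real.sqrt (p x) - Real.sqrt (p' x)| ∂lam ≤ d₁ := by
    have h := cs_integral hL2p₁ hw₁ (fun x => Real.sqrt_nonneg _) (fun x => abs_nonneg _)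
    have e1 : ∫ x, Real.sqrt (p₁ x) ^ 2 ∂lam = 1 := by
      rw [← hp₁int]
      exact integral_congr_ae (Filter.Eventually.of_forall fun x => Real.sq_sqrt (hp₁0 x).le)
    have e2 : ∫ x, |Real.sqrt (p x) - Real.sqrt (p' x)| ^ 2 ∂lam
        = ∫ x, (Real.sqrt (p x) - Real.sqrt (p' x)) ^ 2 ∂lam :=
      integral_congr_ae (Filter.Eventually.of_forall fun x => sq_abs _)
    rw [e1, e2] at h
    simpa [hd₁_def] using h
  have hCS₂ : ∫ x, Real.sqrt (p' x) * |Real.sqrt (p₁ x) - Real.sqrt (p₁' x)| ∂lam ≤ d₂ := by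
    have h := cs_integral hL2p' hw₂ (fun x => Real.sqrt_nonneg _) (fun x => abs_nonneg _)
    have e1 : ∫ x, Real.sqrt (p' x) ^ 2 ∂lam = 1 := by
      rw [← hp'int]
      exact integral_congr_ae (Filter.Eventually.of_forall fun x => Real.sq_sqrt (hp'0 x).le)
    have e2 : ∫ x, |Real.sqrt (p₁ x) - Real.sqrt (p₁' x)| ^ 2 ∂lam
        = ∫ x, (Real.sqrt (p₁ x) - Real.sqrt (p₁' x)) ^ 2 ∂lam :=
      integral_congr_ae (Filter.Eventually.of_forall fun x => sq_abs _)
    rw [e1, e2] at h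
    simpa [hd₂_def] using h
  have hs_le : s ≤ d₁ + d₂ := by
    have h1 : s ≤ ∫ x, (Real.sqrt (p₁ x) * |Real.sqrt (p x) - Real.sqrt (p' x)|
        + Real.sqrt (p' x) * |Real.sqrt (p₁ x) - Real.sqrt (p₁' x)|) ∂lam := by
      rw [hs_def]
      exact integral_mono hs_int (hint₁.add hint₂) hpt2
    rw [integral_add hint₁ hint₂] at h1
    linarith
  -- conclude
  rw [hLHS]
  have hsab : s ≤ a^2 + b^2 := by rw [haA, hbA]; linarith [hs_eq, hc0]
  have halg := alg_ineq ha hb hs0 hsab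
  have h2c : a^2 + b^2 - s = 2 * c := by rw [haA, hbA]; linarith [hs_eq]
  rw [h2c] at halg
  have hfin : 2 * s / a ^ 2 ≤ 2 / A * (d₁ + d₂) := by
    rw [haA, show (2:ℝ) / A * (d₁ + d₂) = 2 * (d₁ + d₂) / A by ring]
    exact (div_le_div_iff_of_pos_right hH).2 (by linarith)
  calc 2 - 2 * c / (a * b) ≤ 2 * s / a ^ 2 := halg
    _ ≤ 2 / A * (d₁ + d₂) := hfin
end
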